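/- Let Q_t be a continuous family of quadratic forms on R^(ℓ+1) parametrized by a topological space T, such that index(Q_t) = j for all t ∈ T. Then the map t ↦ L_j⁺(Q_t), assigning to t the (ℓ+1−j)-dimensional sum of nonnegative eigenspaces of Q_t, is continuous as a map T → Gr(ℓ+1−j, ℓ+1). -/

import Mathlib

open scoped BigOperators RealInnerProductSpace
open Finset Submodule Module

noncomputable section

/-- The index of the quadratic form `y ↦ ⟪f y, y⟫` of an operator `f` on `ℝ^(ℓ+1)`
(for `f` self-adjoint, the number of negative eigenvalues): the largest dimension of a
subspace on which the quadratic form is negative definite. -/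
def opIndex {ℓ : ℕ} (f : EuclideanSpace ℝ (Fin (ℓ + 1)) →L[ℝ] EuclideanSpace ℝ (Fin (ℓ + 1))) :
    ℕ :=
  sSup {d | ∃ L : Submodule ℝ (EuclideanSpace ℝ (Fin (ℓ + 1))),
    Module.finrank ℝ L = d ∧ ∀ y ∈ L, y ≠ 0 → ⟪f y, y⟫ < 0}

namespace LplusAux
variable {ℓ : ℕ}
abbrev Euc (ℓ : ℕ) := EuclideanSpace ℝ (Fin (ℓ + 1))
variable (b : OrthonormalBasis (Fin (ℓ + 1)) ℝ (Euc ℓ))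
def V (p : Fin (ℓ + 1) → Prop) : Submodule ℝ (Euc ℓ) :=
  Submodule.span ℝ (Set.range fun i : {i // p i} => b (i : Fin (ℓ + 1)))

lemma inner_bb (i k : Fin (ℓ + 1)) : ⟪b i, b k⟫ = if i = k then (1:ℝ) else 0 :=
  orthonormal_iff_ite.mp b.orthonormal i k

lemma mem_V_iff {p : Fin (ℓ + 1) → Prop} {x : Euc ℓ} :
    x ∈ V b p ↔ ∀ i, ¬ p i → ⟪b i, x⟫ = 0 := by
  classical
  constructor
  · intro hx i hi
    induction hx using Submodule.span_induction with
    | mem y hy =>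
      obtain ⟨⟨k, hk⟩, rfl⟩ := hy
      rw [inner_bb, if_neg]; rintro rfl; exact hi hk
    | zero => simp
    | add y z _ _ hy hz => rw [inner_add_right, hy, hz, add_zero]
    | smul c y _ hy => rw [real_inner_smul_right, hy, mul_zero]
  · intro h
    have hx : x = ∑ i, ⟪b i, x⟫ • b i := (b.sum_repr' x).symm
    rw [hx]
    refine Submodule.sum_mem _ fun i _ => ?_
    by_cases hp : p i
    · exact Submodule.smul_mem _ _ (Submodule.subset_span ⟨⟨i, hp⟩, rfl⟩)
    · rw [h i hp, zero_smul]; exact Submodule.zero_mem _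

lemma finrank_V (p : Fin (ℓ + 1) → Prop) [DecidablePred p] :
    finrank ℝ (V b p) = (Finset.univ.filter p).card := by
  have hli := b.orthonormal.linearIndependent.comp (Subtype.val : {i // p i} → _)
      Subtype.val_injective
  have := finrank_span_eq_card hli
  rw [V]
  rw [show (Set.range fun i : {i // p i} => b (i : Fin (ℓ + 1))) = Set.range (b ∘ Subtype.val) from rfl, this]
  simp [Fintype.card_subtype]

lemma finrank_euc : finrank ℝ (Euc ℓ) = ℓ + 1 := finrank_euclideanSpace_fin

lemma norm_sq_eq (x : Euc ℓ) : ‖x‖ ^ 2 = ∑ i, ⟪b i, x⟫ ^ 2 := by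
  have h := b.sum_inner_mul_inner x x
  rw [real_inner_self_eq_norm_sq] at h
  rw [← h]
  congr 1; ext i; rw [real_inner_comm x (b i)]; ring

variable (f : Euc ℓ →L[ℝ] Euc ℓ) (lam : Fin (ℓ + 1) → ℝ)

lemma inner_bf (hs : ∀ x y, ⟪f x, y⟫ = ⟪x, f y⟫)
    (hb : ∀ i, f (b i) = lam i • b i) (i : Fin (ℓ + 1)) (x : Euc ℓ) :
    ⟪b i, f x⟫ = lam i * ⟪b i, x⟫ := by
  rw [← hs (b i) x, hb i, real_inner_smul_left]

lemma quad_eq (hs : ∀ x y, ⟪f x, y⟫ = ⟪x, f y⟫)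
    (hb : ∀ i, f (b i) = lam i • b i) (x : Euc ℓ) :
    ⟪f x, x⟫ = ∑ i, lam i * ⟪b i, x⟫ ^ 2 := by
  rw [← b.sum_inner_mul_inner (f x) x]
  congr 1; ext i
  rw [show ⟪f x, b i⟫ = ⟪b i, f x⟫ from real_inner_comm _ _, inner_bf b f lam hs hb]; ring

lemma quad_le_on_V {p : Fin (ℓ + 1) → Prop} {a : ℝ}
    (hs : ∀ x y, ⟪f x, y⟫ = ⟪x, f y⟫) (hb : ∀ i, f (b i) = lam i • b i)
    (hp : ∀ i, p i → lam i ≤ a) {x : Euc ℓ} (hx : x ∈ V b p) :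
    ⟪f x, x⟫ ≤ a * ‖x‖ ^ 2 := by
  rw [quad_eq b f lam hs hb, norm_sq_eq b, Finset.mul_sum]
  refine Finset.sum_le_sum fun i _ => ?_
  by_cases hpi : p i
  · exact mul_le_mul_of_nonneg_right (hp i hpi) (sq_nonneg _)
  · rw [(mem_V_iff b).mp hx i hpi]; simp

lemma quad_ge_on_V {p : Fin (ℓ + 1) → Prop} {a : ℝ}
    (hs : ∀ x y, ⟪f x, y⟫ = ⟪x, f y⟫) (hb : ∀ i, f (b i) = lam i • b i)
    (hp : ∀ i, p i → a ≤ lam i) {x : Euc ℓ} (hx : x ∈ V b p) :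
    a * ‖x‖ ^ 2 ≤ ⟪f x, x⟫ := by
  rw [quad_eq b f lam hs hb, norm_sq_eq b, Finset.mul_sum]
  refine Finset.sum_le_sum fun i _ => ?_
  by_cases hpi : p i
  · exact mul_le_mul_of_nonneg_right (hp i hpi) (sq_nonneg _)
  · rw [(mem_V_iff b).mp hx i hpi]; simp

lemma quad_neg_on_V (hs : ∀ x y, ⟪f x, y⟫ = ⟪x, f y⟫)
    (hb : ∀ i, f (b i) = lam i • b i) {x : Euc ℓ}
    (hx : x ∈ V b (fun i => lam i < 0)) (hx0 : x ≠ 0) :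
    ⟪f x, x⟫ < 0 := by
  rw [quad_eq b f lam hs hb]
  have hex : ∃ i, ⟪b i, x⟫ ≠ 0 := by
    by_contra h
    push_neg at h
    apply hx0
    rw [← b.sum_repr' x]
    simp only [h, zero_smul, Finset.sum_const_zero]
  obtain ⟨i, hi⟩ := hex
  have hli : lam i < 0 := by
    by_contra h
    exact hi ((mem_V_iff b).mp hx i h)
  have : ∑ k, lam k * ⟪b k, x⟫ ^ 2 < ∑ k : Fin (ℓ+1), (0:ℝ) := by
    refine Finset.sum_lt_sum (fun k _ => ?_) ⟨i, Finset.mem_univ i, ?_⟩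
    · by_cases hpk : lam k < 0
      · exact mul_nonpos_of_nonpos_of_nonneg hpk.le (sq_nonneg _)
      · rw [(mem_V_iff b).mp hx k hpk]; simp
    · exact mul_neg_of_neg_of_pos hli (by positivity)
  simpa using this

lemma V_eq_Lplus (hs : ∀ x y, ⟪f x, y⟫ = ⟪x, f y⟫)
    (hb : ∀ i, f (b i) = lam i • b i) :
    (⨆ μ : {μ : ℝ // 0 ≤ μ}, Module.End.eigenspace
      (↑f : Euc ℓ →ₗ[ℝ] Euc ℓ) (μ : ℝ)) = V b (fun i => 0 ≤ lam i) := by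
  apply le_antisymm
  · refine iSup_le fun μ => fun x hx => (mem_V_iff b).2 fun i hi => ?_
    rw [Module.End.mem_eigenspace_iff] at hx
    have h1 : ⟪b i, f x⟫ = lam i * ⟪b i, x⟫ := inner_bf b f lam hs hb i x
    have h2 : ⟪b i, f x⟫ = (μ : ℝ) * ⟪b i, x⟫ := by
      have : (↑f : Euc ℓ →ₗ[ℝ] Euc ℓ) x = f x := rfl
      rw [← this, hx, real_inner_smul_right]
    have : (lam i - (μ : ℝ)) * ⟪b i, x⟫ = 0 := by rw [sub_mul, h1.symm.trans h2]; ring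
    rcases mul_eq_zero.mp this with h | h
    · exact absurd (by linarith [μ.2, sub_eq_zero.mp h]) hi
    · exact h
  · rw [V, Submodule.span_le]
    rintro y ⟨⟨i, hi⟩, rfl⟩
    refine Submodule.mem_iSup_of_mem ⟨lam i, hi⟩ ?_
    rw [Module.End.mem_eigenspace_iff]
    exact hb i

lemma opIndex_eq (hs : ∀ x y, ⟪f x, y⟫ = ⟪x, f y⟫)
    (hb : ∀ i, f (b i) = lam i • b i) :
    opIndex f = (Finset.univ.filter fun i => lam i < 0).card := by
  classical
  have hub : ∀ d ∈ {d | ∃ L : Submodule ℝ (Euc ℓ),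
      Module.finrank ℝ L = d ∧ ∀ y ∈ L, y ≠ 0 → ⟪f y, y⟫ < 0},
      d ≤ (Finset.univ.filter fun i => lam i < 0).card := by
    rintro d ⟨L, rfl, hneg⟩
    have hdisj : L ⊓ V b (fun i => 0 ≤ lam i) = ⊥ := by
      rw [Submodule.eq_bot_iff]
      rintro x ⟨hxL, hxV⟩
      by_contra hx0
      have h1 := hneg x hxL hx0
      have h2 := quad_ge_on_V b f lam (a := 0) hs hb (fun i hi => hi) hxV
      rw [zero_mul] at h2
      linarith
    have h3 := Submodule.finrank_sup_add_finrank_inf_eq L (V b (fun i => 0 ≤ lam i))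
    rw [hdisj, finrank_bot, add_zero] at h3
    have h4 : finrank ℝ ↥(L ⊔ V b (fun i => 0 ≤ lam i)) ≤ ℓ + 1 :=
      le_of_le_of_eq (Submodule.finrank_le _) (finrank_euc (ℓ := ℓ))
    have h5 : finrank ℝ (V b (fun i => 0 ≤ lam i))
        = (Finset.univ.filter fun i => 0 ≤ lam i).card := finrank_V b _
    have h6 : (Finset.univ.filter fun i => 0 ≤ lam i).card
        + (Finset.univ.filter fun i => lam i < 0).card = ℓ + 1 := by
      have h := Finset.card_filter_add_card_filter_not
        (s := (Finset.univ : Finset (Fin (ℓ + 1)))) (p := fun i => 0 ≤ lam i)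
      simp only [not_le] at h
      simpa using h
    omega
  have hmem : (Finset.univ.filter fun i => lam i < 0).card ∈ {d | ∃ L : Submodule ℝ (Euc ℓ),
      Module.finrank ℝ L = d ∧ ∀ y ∈ L, y ≠ 0 → ⟪f y, y⟫ < 0} :=
    ⟨V b (fun i => lam i < 0), finrank_V b _,
      fun y hy hy0 => quad_neg_on_V b f lam hs hb hy hy0⟩
  exact le_antisymm (csSup_le ⟨_, hmem⟩ hub) (le_csSup ⟨_, hub⟩ hmem)


lemma inner_b_sum (s : Finset (Fin (ℓ + 1))) (c : Fin (ℓ + 1) → ℝ) (i : Fin (ℓ + 1)) :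
    ⟪b i, ∑ k ∈ s, c k • b k⟫ = if i ∈ s then c i else 0 := by
  rw [inner_sum]
  simp_rw [real_inner_smul_right, inner_bb, mul_ite, mul_one, mul_zero]
  simp [Finset.sum_ite_eq' s i c]

lemma proj_V (p : Fin (ℓ + 1) → Prop) [DecidablePred p] (x : Euc ℓ) :
    (orthogonalProjection (V b p) x : Euc ℓ)
      = ∑ i ∈ Finset.univ.filter p, ⟪b i, x⟫ • b i := by
  set v := ∑ i ∈ Finset.univ.filter p, ⟪b i, x⟫ • b i with hv
  have hco : ∀ i, ⟪b i, v⟫ = if i ∈ Finset.univ.filter p then ⟪b i, x⟫ else 0 :=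
    fun i => inner_b_sum b _ _ i
  have hvm : v ∈ V b p := by
    rw [mem_V_iff]
    intro i hi
    rw [hco i, if_neg (by simp [hi])]
  refine Submodule.eq_starProjection_of_mem_of_inner_eq_zero hvm fun w hw => ?_
  rw [← b.sum_inner_mul_inner (x - v) w]
  refine Finset.sum_eq_zero fun i _ => ?_
  by_cases hpi : p i
  · have : ⟪x - v, b i⟫ = 0 := by
      rw [inner_sub_left, real_inner_comm (b i) v, hco i, if_pos (by simp [hpi]),
        real_inner_comm (b i) x, sub_self]
    rw [this, zero_mul]
  · rw [(mem_V_iff b).mp hw i hpi, mul_zero]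


/-- partial sum operator -/
def Psum (p : Fin (ℓ + 1) → Prop) [DecidablePred p] (y : Euc ℓ) : Euc ℓ :=
  ∑ i ∈ Finset.univ.filter p, ⟪b i, y⟫ • b i

lemma Psum_add_not (p : Fin (ℓ + 1) → Prop) [DecidablePred p] (y : Euc ℓ) :
    Psum b p y + Psum b (fun i => ¬ p i) y = y := by
  rw [Psum, Psum, Finset.sum_filter_add_sum_filter_not]
  exact b.sum_repr' y

lemma Psum_linear_comb (p : Fin (ℓ + 1) → Prop) [DecidablePred p] (y z : Euc ℓ) :
    Psum b p (y + z) = Psum b p y + Psum b p z := by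
  simp [Psum, inner_add_right, add_smul, Finset.sum_add_distrib]

lemma norm_Psum_Psum_le (c : OrthonormalBasis (Fin (ℓ + 1)) ℝ (Euc ℓ))
    (p q : Fin (ℓ + 1) → Prop) [DecidablePred p] [DecidablePred q] {ε : ℝ} (hε : 0 ≤ ε)
    (h : ∀ i k, p i → q k → |⟪b i, c k⟫| ≤ ε) (x : Euc ℓ) :
    ‖Psum b p (Psum c q x)‖ ≤ (ℓ + 1) ^ 2 * ε * ‖x‖ := by
  have hinner : ∀ i, p i → |⟪b i, Psum c q x⟫| ≤ (ℓ + 1) * ε * ‖x‖ := by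
    intro i hi
    rw [Psum, inner_sum]
    calc |∑ k ∈ Finset.univ.filter q, ⟪b i, ⟪c k, x⟫ • c k⟫|
        ≤ ∑ k ∈ Finset.univ.filter q, |⟪b i, ⟪c k, x⟫ • c k⟫| := Finset.abs_sum_le_sum_abs _ _
      _ ≤ ∑ _k ∈ Finset.univ.filter q, ε * ‖x‖ := by
          refine Finset.sum_le_sum fun k hk => ?_
          rw [real_inner_smul_right, abs_mul]
          calc |⟪c k, x⟫| * |⟪b i, c k⟫|
              ≤ ‖x‖ * ε := by
                refine mul_le_mul ?_ (h i k hi (Finset.mem_filter.mp hk).2) (abs_nonneg _)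
                  (norm_nonneg _)
                calc |⟪c k, x⟫| ≤ ‖c k‖ * ‖x‖ := abs_real_inner_le_norm _ _
                  _ = ‖x‖ := by rw [c.orthonormal.1 k, one_mul]
            _ = ε * ‖x‖ := mul_comm _ _
      _ ≤ (ℓ + 1) * (ε * ‖x‖) := by
          rw [Finset.sum_const, nsmul_eq_mul]
          refine mul_le_mul_of_nonneg_right ?_ (by positivity)
          have hc : (Finset.univ.filter q).card ≤ ℓ + 1 := by
            simpa using Finset.card_filter_le (Finset.univ : Finset (Fin (ℓ + 1))) q
          exact_mod_cast hc
      _ = (ℓ + 1) * ε * ‖x‖ := by ring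
  calc ‖Psum b p (Psum c q x)‖
      ≤ ∑ i ∈ Finset.univ.filter p, ‖⟪b i, Psum c q x⟫ • b i‖ := norm_sum_le _ _
    _ ≤ ∑ _i ∈ Finset.univ.filter p, (ℓ + 1) * ε * ‖x‖ := by
        refine Finset.sum_le_sum fun i hi => ?_
        rw [norm_smul, b.orthonormal.1 i, mul_one, Real.norm_eq_abs]
        exact hinner i (Finset.mem_filter.mp hi).2
    _ ≤ (ℓ + 1) * ((ℓ + 1) * ε * ‖x‖) := by
        rw [Finset.sum_const, nsmul_eq_mul]
        refine mul_le_mul_of_nonneg_right ?_ (by positivity)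
        have hc : (Finset.univ.filter p).card ≤ ℓ + 1 := by
          simpa using Finset.card_filter_le (Finset.univ : Finset (Fin (ℓ + 1))) p
        exact_mod_cast hc
    _ = (ℓ + 1) ^ 2 * ε * ‖x‖ := by ring

lemma cross_bound (f g : Euc ℓ →L[ℝ] Euc ℓ)
    (hsf : ∀ x y, ⟪f x, y⟫ = ⟪x, f y⟫)
    (hbf : ∀ i, f (b i) = lam i • b i)
    (c : OrthonormalBasis (Fin (ℓ + 1)) ℝ (Euc ℓ)) (mu : Fin (ℓ + 1) → ℝ)
    (hbg : ∀ k, g (c k) = mu k • c k)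
    {a : ℝ} (ha : a < 0) (i k : Fin (ℓ + 1)) (hgap : -a ≤ |lam i - mu k|) :
    |⟪b i, c k⟫| ≤ ‖f - g‖ / (-a) := by
  have h1 : ⟪b i, f (c k)⟫ = lam i * ⟪b i, c k⟫ := inner_bf b f lam hsf hbf i (c k)
  have h2 : ⟪b i, g (c k)⟫ = mu k * ⟪b i, c k⟫ := by
    rw [hbg k, real_inner_smul_right]
  have h3 : (lam i - mu k) * ⟪b i, c k⟫ = ⟪b i, (f - g) (c k)⟫ := by
    rw [ContinuousLinearMap.sub_apply, inner_sub_right, h1, h2]; ring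
  have h4 : |lam i - mu k| * |⟪b i, c k⟫| ≤ ‖f - g‖ := by
    rw [← abs_mul, h3]
    calc |⟪b i, (f - g) (c k)⟫| ≤ ‖b i‖ * ‖(f - g) (c k)‖ := abs_real_inner_le_norm _ _
      _ = ‖(f - g) (c k)‖ := by rw [b.orthonormal.1 i, one_mul]
      _ ≤ ‖f - g‖ * ‖c k‖ := (f - g).le_opNorm _
      _ = ‖f - g‖ := by rw [c.orthonormal.1 k, mul_one]
  rw [le_div_iff₀ (by linarith)]
  calc |⟪b i, c k⟫| * -a ≤ |⟪b i, c k⟫| * |lam i - mu k| :=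
        mul_le_mul_of_nonneg_left hgap (abs_nonneg _)
    _ = |lam i - mu k| * |⟪b i, c k⟫| := mul_comm _ _
    _ ≤ ‖f - g‖ := h4

lemma proj_diff_bound (f g : Euc ℓ →L[ℝ] Euc ℓ)
    (hsf : ∀ x y, ⟪f x, y⟫ = ⟪x, f y⟫)
    (hbf : ∀ i, f (b i) = lam i • b i)
    (c : OrthonormalBasis (Fin (ℓ + 1)) ℝ (Euc ℓ)) (mu : Fin (ℓ + 1) → ℝ)
    (hbg : ∀ k, g (c k) = mu k • c k)
    {a : ℝ} (ha : a < 0)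
    (hfa : ∀ i, lam i < 0 → lam i ≤ a) (hga : ∀ k, mu k < 0 → mu k ≤ a)
    (x : Euc ℓ) :
    ‖Psum b (fun i => 0 ≤ lam i) x - Psum c (fun k => 0 ≤ mu k) x‖
      ≤ (2 * (ℓ + 1) ^ 2 / (-a)) * ‖f - g‖ * ‖x‖ := by
  classical
  set ε := ‖f - g‖ / (-a) with hε
  have hε0 : 0 ≤ ε := div_nonneg (norm_nonneg _) (by linarith)
  set X := Psum b (fun i => 0 ≤ lam i) (Psum c (fun k => 0 ≤ mu k) x) with hX
  set Y := Psum b (fun i => 0 ≤ lam i) (Psum c (fun k => ¬ 0 ≤ mu k) x) with hY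
  set Z := Psum b (fun i => ¬ 0 ≤ lam i) (Psum c (fun k => 0 ≤ mu k) x) with hZ
  have key : Psum b (fun i => 0 ≤ lam i) x - Psum c (fun k => 0 ≤ mu k) x = Y - Z := by
    have h1 : Psum b (fun i => 0 ≤ lam i) x = X + Y := by
      rw [hX, hY, ← Psum_linear_comb, Psum_add_not]
    have h2 : Psum c (fun k => 0 ≤ mu k) x = X + Z := by
      rw [hX, hZ]; exact (Psum_add_not b _ _).symm
    rw [h1, h2]; abel
  rw [key]
  have t1 : ‖Y‖ ≤ (ℓ + 1) ^ 2 * ε * ‖x‖ := by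
    rw [hY]
    refine norm_Psum_Psum_le b c _ _ hε0 (fun i k hi hk => ?_) x
    refine cross_bound b lam f g hsf hbf c mu hbg ha i k ?_
    have hk' : mu k ≤ a := hga k (not_le.mp hk)
    rw [abs_of_nonneg (by linarith)]; linarith
  have t2 : ‖Z‖ ≤ (ℓ + 1) ^ 2 * ε * ‖x‖ := by
    rw [hZ]
    refine norm_Psum_Psum_le b c _ _ hε0 (fun i k hi hk => ?_) x
    refine cross_bound b lam f g hsf hbf c mu hbg ha i k ?_
    have hi' : lam i ≤ a := hfa i (not_le.mp hi)
    rw [abs_of_nonpos (by linarith), neg_sub]; linarith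
  calc ‖Y - Z‖ ≤ ‖Y‖ + ‖Z‖ := norm_sub_le _ _
    _ ≤ (ℓ + 1) ^ 2 * ε * ‖x‖ + (ℓ + 1) ^ 2 * ε * ‖x‖ := add_le_add t1 t2
    _ = (2 * (ℓ + 1) ^ 2 / (-a)) * ‖f - g‖ * ‖x‖ := by
        rw [hε]; ring


lemma card_split : (Finset.univ.filter fun i => 0 ≤ lam i).card
    + (Finset.univ.filter fun i => lam i < 0).card = ℓ + 1 := by
  classical
  have h := Finset.card_filter_add_card_filter_not
    (s := (Finset.univ : Finset (Fin (ℓ + 1)))) (p := fun i => 0 ≤ lam i)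
  simp only [not_le] at h
  simpa using h

lemma gap_lemma (f g : Euc ℓ →L[ℝ] Euc ℓ)
    (hsf : ∀ x y, ⟪f x, y⟫ = ⟪x, f y⟫)
    (hbf : ∀ i, f (b i) = lam i • b i)
    (c : OrthonormalBasis (Fin (ℓ + 1)) ℝ (Euc ℓ)) (mu : Fin (ℓ + 1) → ℝ)
    (hsg : ∀ x y, ⟪g x, y⟫ = ⟪x, g y⟫)
    (hbg : ∀ k, g (c k) = mu k • c k)
    (j : ℕ)
    (hjf : (Finset.univ.filter fun i => lam i < 0).card = j)
    (hjg : (Finset.univ.filter fun k => mu k < 0).card = j)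
    {a₀ δ : ℝ} (hδ : 0 < δ) (haδ : a₀ + δ < 0)
    (hlam_le : ∀ i, lam i < 0 → lam i ≤ a₀)
    (hng : ‖g - f‖ < δ) :
    ∀ k, mu k < 0 → mu k ≤ a₀ + δ := by
  classical
  -- Step A : at least j eigenvalues of g are ≤ a₀ + δ
  have hdisj : V b (fun i => lam i < 0) ⊓ V c (fun k => a₀ + δ < mu k) = ⊥ := by
    rw [Submodule.eq_bot_iff]
    rintro x ⟨hxL, hxW⟩
    by_contra hx0
    have hs2 : (0:ℝ) < ‖x‖ ^ 2 := pow_pos (norm_pos_iff.mpr hx0) 2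
    have q1 : (a₀ + δ) * ‖x‖ ^ 2 ≤ ⟪g x, x⟫ :=
      quad_ge_on_V c g mu hsg hbg (fun k hk => hk.le) hxW
    have q2 : ⟪f x, x⟫ ≤ a₀ * ‖x‖ ^ 2 :=
      quad_le_on_V b f lam hsf hbf hlam_le hxL
    have q3 : ⟪g x, x⟫ - ⟪f x, x⟫ < δ * ‖x‖ ^ 2 := by
      have h1 : ⟪g x, x⟫ - ⟪f x, x⟫ = ⟪(g - f) x, x⟫ := by
        rw [ContinuousLinearMap.sub_apply, inner_sub_left]
      have h2 : ⟪(g - f) x, x⟫ ≤ ‖g - f‖ * ‖x‖ ^ 2 := by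
        calc ⟪(g - f) x, x⟫ ≤ |⟪(g - f) x, x⟫| := le_abs_self _
          _ ≤ ‖(g - f) x‖ * ‖x‖ := abs_real_inner_le_norm _ _
          _ ≤ ‖g - f‖ * ‖x‖ * ‖x‖ :=
              mul_le_mul_of_nonneg_right ((g - f).le_opNorm x) (norm_nonneg _)
          _ = ‖g - f‖ * ‖x‖ ^ 2 := by ring
      have h3 : ‖g - f‖ * ‖x‖ ^ 2 < δ * ‖x‖ ^ 2 :=
        mul_lt_mul_of_pos_right hng hs2
      linarith [h1 ▸ h2]
    nlinarith
  have hA : j ≤ (Finset.univ.filter fun k => mu k ≤ a₀ + δ).card := by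
    have h3 := Submodule.finrank_sup_add_finrank_inf_eq
      (V b (fun i => lam i < 0)) (V c (fun k => a₀ + δ < mu k))
    rw [hdisj, finrank_bot, add_zero, finrank_V, finrank_V] at h3
    have h4 : finrank ℝ ↥(V b (fun i => lam i < 0) ⊔ V c (fun k => a₀ + δ < mu k)) ≤ ℓ + 1 :=
      le_of_le_of_eq (Submodule.finrank_le _) (finrank_euc (ℓ := ℓ))
    have h5 : (Finset.univ.filter fun k => mu k ≤ a₀ + δ).card
        + (Finset.univ.filter fun k => a₀ + δ < mu k).card = ℓ + 1 := by
      have h := Finset.card_filter_add_card_filter_not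
        (s := (Finset.univ : Finset (Fin (ℓ + 1)))) (p := fun k => mu k ≤ a₀ + δ)
      simp only [not_le] at h
      simpa using h
    omega
  -- Step B : those are exactly the negative ones
  have hsub : (Finset.univ.filter fun k => mu k ≤ a₀ + δ)
      ⊆ (Finset.univ.filter fun k => mu k < 0) := by
    intro k hk
    rw [Finset.mem_filter] at hk ⊢
    exact ⟨hk.1, lt_of_le_of_lt hk.2 haδ⟩
  have heq := Finset.eq_of_subset_of_card_le hsub (by omega)
  intro k hk
  have : k ∈ (Finset.univ.filter fun k => mu k ≤ a₀ + δ) := by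
    rw [heq, Finset.mem_filter]; exact ⟨Finset.mem_univ k, hk⟩
  exact (Finset.mem_filter.mp this).2

end LplusAux

open LplusAux

/-- Let `Q_t` be a continuous family of quadratic forms on `ℝ^(ℓ+1)`
(given by a continuous family of self-adjoint operators `A t`), parametrized by a topological
space `T`, with `index (Q_t) = j` for all `t`.  Then `t ↦ L⁺(Q_t)`, the sum of the
eigenspaces with nonnegative eigenvalues, is a continuous family of `(ℓ+1-j)`-dimensional
subspaces: it has constant dimension `ℓ + 1 - j` and the corresponding family of orthogonal
projections of `ℝ^(ℓ+1)` (which embeds the Grassmannian `Gr(ℓ+1-j, ℓ+1)` in the space of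
operators) depends continuously on `t`. -/
theorem Lplus_continuous_into_grassmannian {T : Type*} [TopologicalSpace T] (ℓ j : ℕ)
    (hj : j ≤ ℓ + 1)
    (A : T → EuclideanSpace ℝ (Fin (ℓ + 1)) →L[ℝ] EuclideanSpace ℝ (Fin (ℓ + 1)))
    (hcont : Continuous A)
    (hsym : ∀ t x y, ⟪A t x, y⟫ = ⟪x, A t y⟫)
    (hindex : ∀ t, opIndex (A t) = j)
    (Lplus : T → Submodule ℝ (EuclideanSpace ℝ (Fin (ℓ + 1))))
    (hL : ∀ t, Lplus t = ⨆ μ : {μ : ℝ // 0 ≤ μ},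
      Module.End.eigenspace (↑(A t) : EuclideanSpace ℝ (Fin (ℓ + 1)) →ₗ[ℝ]
        EuclideanSpace ℝ (Fin (ℓ + 1))) (μ : ℝ)) :
    (∀ t, Module.finrank ℝ (Lplus t) = ℓ + 1 - j) ∧
    Continuous fun t => (Lplus t).subtypeL.comp (Lplus t).orthogonalProjectionOnto := by
  have := hj
  classical
  have hrank : Module.finrank ℝ (Euc ℓ) = ℓ + 1 := finrank_euc
  have hsym' : ∀ t, (↑(A t) : Euc ℓ →ₗ[ℝ] Euc ℓ).IsSymmetric := fun t x y => hsym t x y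
  set b : T → OrthonormalBasis (Fin (ℓ + 1)) ℝ (Euc ℓ) :=
    fun t => (hsym' t).eigenvectorBasis hrank with hbdef
  set lam : T → Fin (ℓ + 1) → ℝ := fun t => (hsym' t).eigenvalues hrank with hlamdef
  have hbt : ∀ t i, A t (b t i) = lam t i • b t i := by
    intro t i
    exact (hsym' t).apply_eigenvectorBasis hrank i
  have hLV : ∀ t, Lplus t = V (b t) (fun i => 0 ≤ lam t i) := by
    intro t
    rw [hL t]
    exact V_eq_Lplus (b t) (A t) (lam t) (hsym t) (hbt t)
  have hcard : ∀ t, (Finset.univ.filter fun i => lam t i < 0).card = j := by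
    intro t
    rw [← hindex t, opIndex_eq (b t) (A t) (lam t) (hsym t) (hbt t)]
  have hfr : ∀ t, Module.finrank ℝ (Lplus t) = ℓ + 1 - j := by
    intro t
    rw [hLV t, finrank_V]
    have := card_split (lam t)
    rw [hcard t] at this
    omega
  refine ⟨hfr, ?_⟩
  rw [continuous_iff_continuousAt]
  intro t₀
  -- the spectral gap at t₀
  set S₀ : Finset ℝ :=
    insert (-1 : ℝ) ((Finset.univ.filter fun i => lam t₀ i < 0).image (lam t₀)) with hS₀
  set a₀ : ℝ := S₀.max' ⟨-1, Finset.mem_insert_self _ _⟩ with ha₀def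
  have ha₀neg : a₀ < 0 := by
    rw [ha₀def]
    apply (Finset.max'_lt_iff _ _).mpr
    intro y hy
    rcases Finset.mem_insert.mp hy with h | h
    · rw [h]; norm_num
    · obtain ⟨i, hi, rfl⟩ := Finset.mem_image.mp h
      exact (Finset.mem_filter.mp hi).2
  have hlam_le : ∀ i, lam t₀ i < 0 → lam t₀ i ≤ a₀ := fun i hi =>
    Finset.le_max' _ _ (Finset.mem_insert_of_mem
      (Finset.mem_image_of_mem _ (Finset.mem_filter.mpr ⟨Finset.mem_univ i, hi⟩)))
  set δ : ℝ := -a₀ / 4 with hδdef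
  have hδpos : 0 < δ := by rw [hδdef]; linarith
  have haδ : a₀ + δ < 0 := by rw [hδdef]; linarith
  set a : ℝ := a₀ + δ with hadef
  set K : ℝ := 2 * ((ℓ : ℝ) + 1) ^ 2 / (-a) with hKdef
  have hK0 : 0 ≤ K := div_nonneg (by positivity) (by linarith)
  set P : T → Euc ℓ →L[ℝ] Euc ℓ :=
    fun t => (Lplus t).subtypeL.comp (Lplus t).orthogonalProjectionOnto with hPdef
  have hPx : ∀ t x, P t x = Psum (b t) (fun i => 0 ≤ lam t i) x := by
    intro t x
    rw [hPdef]
    simp only [ContinuousLinearMap.comp_apply, Submodule.subtypeL_apply]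
    rw [hLV t]
    exact proj_V (b t) _ x
  have hbound : ∀ t, ‖A t - A t₀‖ < δ → dist (P t) (P t₀) ≤ K * dist (A t) (A t₀) := by
    intro t ht
    have hga : ∀ k, lam t k < 0 → lam t k ≤ a := by
      exact gap_lemma (b t₀) (lam t₀) (A t₀) (A t) (hsym t₀) (hbt t₀) (b t) (lam t)
        (hsym t) (hbt t) j (hcard t₀) (hcard t) hδpos haδ hlam_le ht
    have hfa : ∀ i, lam t₀ i < 0 → lam t₀ i ≤ a := fun i hi => by
      have := hlam_le i hi; rw [hadef]; linarith
    rw [dist_eq_norm, dist_eq_norm]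
    refine ContinuousLinearMap.opNorm_le_bound _ (mul_nonneg hK0 (norm_nonneg _)) fun x => ?_
    rw [ContinuousLinearMap.sub_apply, hPx t, hPx t₀]
    have := proj_diff_bound (b t) (lam t) (A t) (A t₀) (hsym t) (hbt t)
      (b t₀) (lam t₀) (hbt t₀) (by linarith : a < 0) hga hfa x
    calc ‖Psum (b t) (fun i => 0 ≤ lam t i) x - Psum (b t₀) (fun i => 0 ≤ lam t₀ i) x‖
        ≤ 2 * (ℓ + 1) ^ 2 / (-a) * ‖A t - A t₀‖ * ‖x‖ := this
      _ = K * ‖A t - A t₀‖ * ‖x‖ := by rw [hKdef]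
  have hU : ∀ᶠ t in nhds t₀, ‖A t - A t₀‖ < δ := by
    have hc : Continuous fun t => ‖A t - A t₀‖ := (hcont.sub continuous_const).norm
    have h1 : Filter.Tendsto (fun t => ‖A t - A t₀‖) (nhds t₀) (nhds 0) := by
      have h2 : ContinuousAt (fun t => ‖A t - A t₀‖) t₀ := hc.continuousAt
      rw [ContinuousAt] at h2
      simpa using h2
    exact h1.eventually_lt_const hδpos
  have hdist0 : Filter.Tendsto (fun t => K * dist (A t) (A t₀)) (nhds t₀) (nhds 0) := by
    have h1 : Filter.Tendsto (fun t => dist (A t) (A t₀)) (nhds t₀) (nhds 0) := by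
      have := (hcont.tendsto t₀).dist (tendsto_const_nhds (x := A t₀))
      simpa using this
    simpa using h1.const_mul K
  rw [ContinuousAt, tendsto_iff_dist_tendsto_zero]
  exact squeeze_zero' (Filter.Eventually.of_forall fun t => dist_nonneg)
    (hU.mono fun t ht => hbound t ht) hdist0


end
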